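/- Define the operator B_M on vectors r ∈ (ℕ ∪ {∞})^S by B_M(r) = ⌈A_M(r)⌉, where A_M(r)(s) = Safe_M(s) for s ∈ T and A_M(r)(s) = min_a SPR(s, a, r) otherwise, with SPR(s,a,x) = C(s,a) + min over t ∈ Succ(s,a) of max{x(t), Safe_M(t') : t' ∈ Succ(s,a), t' ≠ t}, and the two-sided truncation ⌈x⌉(s) = ∞ if x(s) > cap, 0 if x(s) ≤ cap and s ∈ R, and x(s) otherwise. Let y_T(s) = Safe_M(s) for s ∈ T and ∞ otherwise. Then for every i ≥ 0 and every state s, B_M^i(y_T)(s) equals the minimal ℓ such that some strategy is ℓ-safe in s and produces at least one run visiting T within the first i steps (∞ if no such ℓ ≤ cap exists). -/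

import Mathlib

open scoped Classical NNReal ENat

noncomputable section

/-- A consumption Markov decision process. -/
structure CMDP (S A : Type) [Fintype S] where
  Δ : S → A → S → NNReal
  Δ_sum : ∀ s a, (∑ t, Δ s a t) = 1
  C : S → A → ℕ
  R : Set S
  cap : ℕ

namespace CMDP

variable {S A : Type} [Fintype S]

/-- Strategies map histories (initial state, list of action/state steps) to actions. -/
abbrev Strat (S A : Type) : Type := S × List (A × S) → A

/-- Last state of a history. -/
def lastState (s : S) : List (A × S) → S
  | [] => s
  | (_, t) :: rest => lastState t rest

/-- The `i`-th state (0-indexed) of a history. -/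
def stateAt (s : S) (steps : List (A × S)) (i : ℕ) : S :=
  (s :: steps.map Prod.snd).getD i s

variable (M : CMDP S A)

def Succ (s : S) (a : A) : Set S := {t | 0 < M.Δ s a t}

/-- Total consumption along a finite path. -/
def consAux : S → List (A × S) → ℕ
  | _, [] => 0
  | s, (a, t) :: rest => M.C s a + consAux t rest

/-- One step of the energy-level update. -/
def levelStep (s : S) (a : A) (l : ℕ) : Option ℕ :=
  if s ∈ M.R then (if M.C s a ≤ M.cap then some (M.cap - M.C s a) else none)
  else (if M.C s a ≤ l then some (l - M.C s a) else none)

def energyFrom : Option ℕ → S → List (A × S) → Option ℕ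
  | none, _, _ => none
  | some l, _, [] => some l
  | some l, s, (a, t) :: rest => energyFrom (M.levelStep s a l) t rest

/-- Energy level of a history initialized by `d` (`none` = ⊥, exhaustion). -/
def energy (d : ℕ) (s : S) (steps : List (A × S)) : Option ℕ :=
  M.energyFrom (some d) s steps

/-- Validity of a finite path. -/
def ValidPath : S → List (A × S) → Prop
  | _, [] => True
  | s, (a, t) :: rest => t ∈ M.Succ s a ∧ ValidPath t rest

/-- First state of a run. -/
def runState (ρ : ℕ → S × A) (i : ℕ) : S := (ρ i).1

/-- The finite prefix of a run with `i` steps. -/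
def prefixSteps (ρ : ℕ → S × A) (i : ℕ) : List (A × S) :=
  (List.range i).map fun k => ((ρ k).2, (ρ (k + 1)).1)

def IsRun (ρ : ℕ → S × A) : Prop := ∀ i, (ρ (i + 1)).1 ∈ M.Succ (ρ i).1 (ρ i).2

/-- A run is `d`-safe if the energy level of every finite prefix is defined. -/
def DSafe (d : ℕ) (ρ : ℕ → S × A) : Prop :=
  ∀ i, M.energy d (runState ρ 0) (prefixSteps ρ i) ≠ none

/-- A run is compatible with a strategy. -/
def Compat (σ : Strat S A) (ρ : ℕ → S × A) : Prop :=
  M.IsRun ρ ∧ ∀ i, (ρ i).2 = σ (runState ρ 0, prefixSteps ρ i)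

def CompatFrom (σ : Strat S A) (s : S) (ρ : ℕ → S × A) : Prop :=
  M.Compat σ ρ ∧ runState ρ 0 = s

/-- A strategy is `d`-safe in `s` if all compatible runs from `s` are `d`-safe. -/
def SafeStrat (σ : Strat S A) (d : ℕ) (s : S) : Prop :=
  ∀ ρ, M.CompatFrom σ s ρ → M.DSafe d ρ

/-- A finite history compatible with a strategy. -/
def CompatHist (σ : Strat S A) (s : S) (steps : List (A × S)) : Prop :=
  M.ValidPath s steps ∧
    ∀ (i : ℕ) (h : i < steps.length), (steps.get ⟨i, h⟩).1 = σ (s, steps.take i)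

def Memoryless (σ : Strat S A) : Prop :=
  ∀ h₁ h₂ : S × List (A × S), lastState h₁.1 h₁.2 = lastState h₂.1 h₂.2 → σ h₁ = σ h₂

/-- Cost of a run up to the first visit of `T` (∞ if `T` is never visited). -/
def reachCost (T : Set S) (ρ : ℕ → S × A) : ℕ∞ :=
  ⨅ i ∈ {i : ℕ | runState ρ i ∈ T}, (M.consAux (runState ρ 0) (prefixSteps ρ i) : ℕ∞)

/-- `i`-step bounded reachability cost. -/
def reachCostBdd (T : Set S) (n : ℕ) (ρ : ℕ → S × A) : ℕ∞ :=
  ⨅ i ∈ {i : ℕ | i ≤ n ∧ runState ρ i ∈ T}, (M.consAux (runState ρ 0) (prefixSteps ρ i) : ℕ∞)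

/-- Reachability cost requiring at least one step. -/
def reachCostPlus (T : Set S) (ρ : ℕ → S × A) : ℕ∞ :=
  ⨅ i ∈ {i : ℕ | 1 ≤ i ∧ runState ρ i ∈ T}, (M.consAux (runState ρ 0) (prefixSteps ρ i) : ℕ∞)

def reachCostStrat (T : Set S) (σ : Strat S A) (s : S) : ℕ∞ :=
  ⨆ ρ ∈ {ρ | M.CompatFrom σ s ρ}, M.reachCost T ρ

def minReach (T : Set S) (s : S) : ℕ∞ :=
  ⨅ σ : Strat S A, M.reachCostStrat T σ s

def minReachBdd (T : Set S) (n : ℕ) (s : S) : ℕ∞ :=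
  ⨅ σ : Strat S A, ⨆ ρ ∈ {ρ | M.CompatFrom σ s ρ}, M.reachCostBdd T n ρ

def minReachPlus (T : Set S) (s : S) : ℕ∞ :=
  ⨅ σ : Strat S A, ⨆ ρ ∈ {ρ | M.CompatFrom σ s ρ}, M.reachCostPlus T ρ

/-- The Bellman operator for minimum cost reachability of `T`. -/
def bellman (T : Set S) (v : S → ℕ∞) : S → ℕ∞ := fun s =>
  if s ∈ T then 0 else ⨅ a : A, ((M.C s a : ℕ∞) + ⨆ t ∈ M.Succ s a, v t)

/-- The initial vector: `0` on `T`, `∞` elsewhere. -/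
def xTvec (T : Set S) : S → ℕ∞ := fun s => if s ∈ T then 0 else ⊤

/-- Length of the longest simple path of `M`. -/
def longestSimple : ℕ :=
  sSup {n | ∃ (s : S) (steps : List (A × S)),
    M.ValidPath s steps ∧ (s :: steps.map Prod.snd).Nodup ∧ steps.length = n}

/-- The augmented CMDP `M̃` with a fresh non-reload copy of every state. -/
def augment : CMDP (S ⊕ S) A where
  Δ := fun x a t =>
    Sum.elim (fun u => M.Δ (Sum.elim id id x) a u) (fun _ => (0 : NNReal)) t
  Δ_sum := by
    intro x a
    rw [Fintype.sum_sum_type]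
    simp [M.Δ_sum (Sum.elim id id x) a]
  C := fun x a => M.C (Sum.elim id id x) a
  R := Sum.inl '' M.R
  cap := M.cap

/-- Truncation to `0` on reload states. -/
def strunc (x : S → ℕ∞) : S → ℕ∞ := fun s => if s ∈ M.R then 0 else x s

/-- The truncated Bellman-like operator `G`. -/
def opG (v : S → ℕ∞) : S → ℕ∞ := fun s =>
  ⨅ a : A, ((M.C s a : ℕ∞) + ⨆ t ∈ M.Succ s a, M.strunc v t)

/-- Minimal `d ≤ cap` such that some strategy is `d`-safe in `s` (∞ if none). -/
def safeVec (s : S) : ℕ∞ :=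
  ⨅ d ∈ {d : ℕ | d ≤ M.cap ∧ ∃ σ : Strat S A, M.SafeStrat σ d s}, (d : ℕ∞)

/-- An action safe in a state. -/
def SafeAction (s : S) (a : A) : Prop :=
  (s ∉ M.R ∧ ((M.C s a : ℕ∞) + ⨆ t ∈ M.Succ s a, M.safeVec t) ≤ M.safeVec s) ∨
  (s ∈ M.R ∧ ((M.C s a : ℕ∞) + ⨆ t ∈ M.Succ s a, M.safeVec t) ≤ (M.cap : ℕ∞))

/-- A CMDP is decreasing if every (valid) simple cycle has positive consumption. -/
def Decreasing : Prop :=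
  ∀ (s : S) (steps : List (A × S)), M.ValidPath s steps → steps ≠ [] →
    lastState s steps = s → (s :: (steps.map Prod.snd).dropLast).Nodup →
    0 < M.consAux s steps

/-- Selection according to a selection rule: the action of the largest
element of the domain below the counter value. -/
def selectFrom (φ : ℕ → Option A) (m : ℕ) (a₀ : A) : A :=
  (((List.range (m + 1)).reverse).findSome? φ).getD a₀

/-- The finite counter strategy `Σ^y` induced by a counter selector. -/
def counterStrategy (sel : S → ℕ → Option A) (y : S → ℕ) (a₀ : A) : Strat S A :=
  fun h =>
    match M.energy (y h.1) h.1 h.2 with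
    | some m => selectFrom (sel (lastState h.1 h.2)) m a₀
    | none => a₀

/-- The `SPR` value of an action. -/
def spr (s : S) (a : A) (x : S → ℕ∞) : ℕ∞ :=
  (M.C s a : ℕ∞) +
    ⨅ t ∈ M.Succ s a, max (x t) (⨆ t' ∈ {t' ∈ M.Succ s a | t' ≠ t}, M.safeVec t')

def opA (T : Set S) (x : S → ℕ∞) : S → ℕ∞ := fun s =>
  if s ∈ T then M.safeVec s else ⨅ a : A, M.spr s a x

/-- Two-sided truncation. -/
def trunc2 (x : S → ℕ∞) : S → ℕ∞ := fun s =>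
  if (M.cap : ℕ∞) < x s then ⊤ else if s ∈ M.R then 0 else x s

def opB (T : Set S) (x : S → ℕ∞) : S → ℕ∞ := M.trunc2 (M.opA T x)

def yTvec (T : Set S) : S → ℕ∞ := fun s => if s ∈ T then M.safeVec s else ⊤

def VisitsWithin (T : Set S) (i : ℕ) (ρ : ℕ → S × A) : Prop :=
  ∃ j ≤ i, runState ρ j ∈ T

def Visits (T : Set S) (ρ : ℕ → S × A) : Prop := ∃ j, runState ρ j ∈ T

/-- Minimal `ℓ ≤ cap` s.t. some `ℓ`-safe strategy from `s` has a run visiting `T`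
within the first `i` steps. -/
def safePRBdd (T : Set S) (i : ℕ) (s : S) : ℕ∞ :=
  ⨅ ℓ ∈ {ℓ : ℕ | ℓ ≤ M.cap ∧ ∃ σ : Strat S A, M.SafeStrat σ ℓ s ∧
      ∃ ρ, M.CompatFrom σ s ρ ∧ VisitsWithin T i ρ}, (ℓ : ℕ∞)

/-- Minimal `ℓ ≤ cap` s.t. some `ℓ`-safe strategy from `s` has a run visiting `T`. -/
def safePR (T : Set S) (s : S) : ℕ∞ :=
  ⨅ ℓ ∈ {ℓ : ℕ | ℓ ≤ M.cap ∧ ∃ σ : Strat S A, M.SafeStrat σ ℓ s ∧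
      ∃ ρ, M.CompatFrom σ s ρ ∧ Visits T ρ}, (ℓ : ℕ∞)

/-- Replace the set of reload states. -/
def setReload (R' : Set S) : CMDP S A := { M with R := R' }

/-- Probability of a finite continuation of a history under a strategy. -/
def pathProbAux (σ : Strat S A) : S × List (A × S) → List (A × S) → NNReal
  | _, [] => 1
  | h, (a, t) :: rest =>
      (if σ h = a then M.Δ (lastState h.1 h.2) a t else 0) *
        pathProbAux σ (h.1, h.2 ++ [(a, t)]) rest

/-- Probability that the length-`n` prefix of a run from `s` under `σ`
satisfies the predicate `P`. -/
def probEvent [Fintype A] (σ : Strat S A) (s : S) (n : ℕ) (P : List (A × S) → Prop) : NNReal :=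
  ∑ f : Fin n → A × S,
    if P (List.ofFn f) then M.pathProbAux σ (s, []) (List.ofFn f) else 0

/-- Number of visits of `T` along a finite path. -/
def visitCount (T : Set S) (s : S) (steps : List (A × S)) : ℕ :=
  (s :: steps.map Prod.snd).countP (fun x => decide (x ∈ T))

/-- `T` is visited infinitely often with probability one under `σ` from `s`. -/
def buchiAS [Fintype A] (σ : Strat S A) (s : S) (T : Set S) : Prop :=
  ∀ k : ℕ,
    (⨆ n : ℕ, M.probEvent σ s n (fun steps => k ≤ visitCount T s steps)) = 1

/-- Minimal `d ≤ cap` s.t. some strategy is `d`-safe in `s` and visits `T`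
infinitely often almost surely. -/
def safeBuchiVec [Fintype A] (T : Set S) (s : S) : ℕ∞ :=
  ⨅ d ∈ {d : ℕ | d ≤ M.cap ∧ ∃ σ : Strat S A, M.SafeStrat σ d s ∧ M.buchiAS σ s T}, (d : ℕ∞)

/-- Iterated memory update of a memory structure. -/
def updStar {Mem : Type} (upd : Mem → S → A → S → Mem) : Mem → S → List (A × S) → Mem
  | m, _, [] => m
  | m, s, (a, t) :: rest => updStar upd (upd m s a t) t rest

/-- Finite-memory strategies: encodable by a finite memory structure. -/
def FinMemStrategy (σ : Strat S A) : Prop :=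
  ∃ (Mem : Type) (_ : Finite Mem) (init : S → Mem) (upd : Mem → S → A → S → Mem)
    (nxt : Mem → S → A),
    ∀ h : S × List (A × S), σ h = nxt (updStar upd (init h.1) h.1 h.2) (lastState h.1 h.2)

/-- The joint run `α ⊙ ρ`. -/
def jointRun (s : S) (steps : List (A × S)) (ρ : ℕ → S × A) : ℕ → S × A :=
  fun i => if h : i < steps.length then (stateAt s steps i, (steps.get ⟨i, h⟩).1)
           else ρ (i - steps.length)


/-! ### Auxiliary development for the main theorem -/

section AuxLemmas
set_option linter.unusedSectionVars false

lemma prefixSteps_zero' (ρ : ℕ → S × A) : prefixSteps ρ 0 = ([] : List (A × S)) := rfl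

lemma prefixSteps_succ' (ρ : ℕ → S × A) (i : ℕ) :
    prefixSteps ρ (i + 1)
      = ((ρ 0).2, (ρ 1).1) :: prefixSteps (fun k => ρ (k + 1)) i := by
  unfold prefixSteps
  rw [List.range_succ_eq_map]
  simp [List.map_map, Function.comp]

lemma prefixSteps_append' (ρ : ℕ → S × A) (n : ℕ) :
    prefixSteps ρ (n + 1) = prefixSteps ρ n ++ [((ρ n).2, (ρ (n + 1)).1)] := by
  unfold prefixSteps
  rw [List.range_succ, List.map_append]
  rfl

/-- Prepend one step to a run. -/
def consRun (p : S × A) (ρ : ℕ → S × A) : ℕ → S × A :=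
  fun i => match i with
  | 0 => p
  | k + 1 => ρ k

@[simp] lemma consRun_zero (p : S × A) (ρ : ℕ → S × A) : consRun p ρ 0 = p := rfl
@[simp] lemma consRun_succ (p : S × A) (ρ : ℕ → S × A) (k : ℕ) : consRun p ρ (k + 1) = ρ k := rfl

lemma prefixSteps_consRun (p : S × A) (ρ : ℕ → S × A) (i : ℕ) :
    prefixSteps (consRun p ρ) (i + 1) = (p.2, (ρ 0).1) :: prefixSteps ρ i := by
  rw [prefixSteps_succ']
  rfl

variable {M}

lemma energy_nil' (d : ℕ) (s : S) : M.energy d s [] = some d := rfl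

lemma energy_cons' (d : ℕ) (s : S) (a : A) (t : S) (rest : List (A × S)) :
    M.energy d s ((a, t) :: rest) = M.energyFrom (M.levelStep s a d) t rest := rfl

lemma energyFrom_mono (steps : List (A × S)) : ∀ (s : S) (l l' m : ℕ), l ≤ l' →
    M.energyFrom (some l) s steps = some m →
    ∃ m', m ≤ m' ∧ M.energyFrom (some l') s steps = some m' := by
  induction steps with
  | nil =>
    intro s l l' m h he
    refine ⟨l', ?_, rfl⟩
    have : l = m := by simpa [energyFrom] using he
    omega
  | cons p rest ih =>
    obtain ⟨a, t⟩ := p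
    intro s l l' m h he
    have he' : M.energyFrom (M.levelStep s a l) t rest = some m := he
    show ∃ m', m ≤ m' ∧ M.energyFrom (M.levelStep s a l') t rest = some m'
    by_cases hr : s ∈ M.R
    · have hls : M.levelStep s a l' = M.levelStep s a l := by simp [CMDP.levelStep, hr]
      rw [hls]
      exact ⟨m, le_rfl, he'⟩
    · by_cases hc : M.C s a ≤ l
      · have h1 : M.levelStep s a l = some (l - M.C s a) := by simp [CMDP.levelStep, hr, hc]
        have h2 : M.levelStep s a l' = some (l' - M.C s a) := by
          simp [CMDP.levelStep, hr, hc.trans h]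
        rw [h1] at he'
        rw [h2]
        exact ih t _ _ m (by omega) he'
      · have h1 : M.levelStep s a l = none := by simp [CMDP.levelStep, hr, hc]
        rw [h1] at he'
        simp [energyFrom] at he'
    
lemma DSafe_mono {d d' : ℕ} (h : d ≤ d') {ρ : ℕ → S × A} (hs : M.DSafe d ρ) :
    M.DSafe d' ρ := by
  intro i
  have h1 := hs i
  rw [Option.ne_none_iff_exists'] at h1 ⊢
  obtain ⟨m, hm⟩ := h1
  obtain ⟨m', _, hm'⟩ := energyFrom_mono _ _ d d' m h hm
  exact ⟨m', hm'⟩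

lemma SafeStrat_mono {σ : Strat S A} {d d' : ℕ} {s : S} (h : d ≤ d')
    (hs : M.SafeStrat σ d s) : M.SafeStrat σ d' s :=
  fun ρ hρ => DSafe_mono h (hs ρ hρ)

lemma succ_nonempty (s : S) (a : A) : ∃ t, t ∈ M.Succ s a := by
  by_contra hno
  push_neg at hno
  have hz : ∀ t, M.Δ s a t = 0 := fun t => le_antisymm (not_lt.1 (hno t)) zero_le
  have h1 := M.Δ_sum s a
  rw [Finset.sum_eq_zero (fun t _ => hz t)] at h1
  exact one_ne_zero h1.symm

variable (M) in
/-- A canonical successor choice. -/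
def succChoice (s : S) (a : A) : S := (succ_nonempty (M := M) s a).choose

lemma succChoice_mem (s : S) (a : A) : M.succChoice s a ∈ M.Succ s a :=
  (succ_nonempty (M := M) s a).choose_spec

variable (M) in
/-- The canonical compatible history sequence of a strategy. -/
def histSeq (σ : Strat S A) (s : S) : ℕ → List (A × S)
  | 0 => []
  | n + 1 =>
      histSeq σ s n ++
        [(σ (s, histSeq σ s n),
          M.succChoice (lastState s (histSeq σ s n)) (σ (s, histSeq σ s n)))]

variable (M) in
/-- A canonical run compatible with a strategy. -/
def canonRun (σ : Strat S A) (s : S) : ℕ → S × A :=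
  fun n => (lastState s (M.histSeq σ s n), σ (s, M.histSeq σ s n))

lemma lastState_append (l₁ l₂ : List (A × S)) : ∀ s : S,
    lastState s (l₁ ++ l₂) = lastState (lastState s l₁) l₂ := by
  induction l₁ with
  | nil => intro s; rfl
  | cons p rest ih => obtain ⟨a, t⟩ := p; intro s; exact ih t

lemma canonRun_prefix (σ : Strat S A) (s : S) (n : ℕ) :
    prefixSteps (M.canonRun σ s) n = M.histSeq σ s n := by
  induction n with
  | zero => rfl
  | succ n ih =>
    rw [prefixSteps_append', ih]
    have h2 : (M.canonRun σ s (n+1)).1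
        = M.succChoice (lastState s (M.histSeq σ s n)) (σ (s, M.histSeq σ s n)) := by
      show lastState s (M.histSeq σ s (n+1)) = _
      rw [CMDP.histSeq, lastState_append]
      rfl
    show M.histSeq σ s n ++ [((M.canonRun σ s n).2, (M.canonRun σ s (n+1)).1)]
        = M.histSeq σ s (n + 1)
    rw [h2, CMDP.histSeq]
    rfl

lemma canonRun_compatFrom (σ : Strat S A) (s : S) :
    M.CompatFrom σ s (M.canonRun σ s) := by
  refine ⟨⟨?_, ?_⟩, rfl⟩
  · intro i
    show (M.canonRun σ s (i+1)).1 ∈ _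
    show lastState s (M.histSeq σ s (i+1)) ∈ _
    rw [CMDP.histSeq, lastState_append]
    exact succChoice_mem _ _
  · intro i
    show σ (s, M.histSeq σ s i) = σ (runState (M.canonRun σ s) 0, prefixSteps (M.canonRun σ s) i)
    rw [canonRun_prefix]
    rfl

end AuxLemmas

section AuxLemmas2
set_option linter.unusedSectionVars false
variable {M : CMDP S A}

/-- Shift of a strategy past a first step `(a, ·)` from `s`. -/
def shiftStrat (σ : Strat S A) (s : S) (a : A) : Strat S A :=
  fun h => σ (s, (a, h.1) :: h.2)

lemma compatFrom_cons {σ : Strat S A} {s : S} {a : A} {t : S} {ρ' : ℕ → S × A}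
    (ha : a = σ (s, [])) (ht : t ∈ M.Succ s a)
    (h : M.CompatFrom (shiftStrat σ s a) t ρ') :
    M.CompatFrom σ s (consRun (s, a) ρ') := by
  obtain ⟨⟨hrun, hact⟩, h0⟩ := h
  have h0' : (ρ' 0).1 = t := h0
  refine ⟨⟨?_, ?_⟩, rfl⟩
  · intro i
    cases i with
    | zero =>
      show (ρ' 0).1 ∈ M.Succ s a
      rw [h0']; exact ht
    | succ k => exact hrun k
  · intro i
    cases i with
    | zero => exact ha
    | succ k =>
      show (ρ' k).2 = σ (runState (consRun (s, a) ρ') 0, prefixSteps (consRun (s, a) ρ') (k + 1))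
      rw [prefixSteps_consRun]
      show (ρ' k).2 = σ (s, (a, (ρ' 0).1) :: prefixSteps ρ' k)
      rw [h0']
      have := hact k
      rw [h0] at this
      exact this
  
lemma compatFrom_shift {σ : Strat S A} {s : S} {ρ : ℕ → S × A}
    (h : M.CompatFrom σ s ρ) :
    M.CompatFrom (shiftStrat σ s (ρ 0).2) (ρ 1).1 (fun k => ρ (k + 1)) := by
  obtain ⟨⟨hrun, hact⟩, h0⟩ := h
  refine ⟨⟨fun i => hrun (i + 1), ?_⟩, rfl⟩
  intro i
  have h1 := hact (i + 1)
  rw [prefixSteps_succ', h0] at h1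
  exact h1

lemma safe_shift {σ : Strat S A} {s : S} {ℓ m : ℕ} {a : A} {t : S}
    (hσ : M.SafeStrat σ ℓ s) (ha : a = σ (s, [])) (ht : t ∈ M.Succ s a)
    (hm : M.levelStep s a ℓ = some m) :
    M.SafeStrat (shiftStrat σ s a) m t := by
  intro ρ' hρ'
  have h0 : (ρ' 0).1 = t := hρ'.2
  have hd := hσ _ (compatFrom_cons ha ht hρ')
  intro i
  have h1 := hd (i + 1)
  have hpre : prefixSteps (consRun (s, a) ρ') (i + 1) = (a, (ρ' 0).1) :: prefixSteps ρ' i :=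
    prefixSteps_consRun _ _ _
  rw [show runState (consRun (s, a) ρ') 0 = s from rfl, hpre, h0, energy_cons', hm] at h1
  show M.energy m (ρ' 0).1 (prefixSteps ρ' i) ≠ none
  rw [h0]
  exact h1

/-- Combine an initial action with a family of continuation strategies. -/
def combineStrat (a : A) (fam : S → Strat S A) : Strat S A :=
  fun h => match h.2 with
  | [] => a
  | (_, t) :: rest => fam t (t, rest)

lemma combine_shift {a : A} {fam : S → Strat S A} {s : S} {ρ : ℕ → S × A}
    (h : M.CompatFrom (combineStrat a fam) s ρ) :
    (ρ 0).2 = a ∧ M.CompatFrom (fam (ρ 1).1) (ρ 1).1 (fun k => ρ (k + 1)) := by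
  obtain ⟨⟨hrun, hact⟩, h0⟩ := h
  have ha0 : (ρ 0).2 = a := hact 0
  refine ⟨ha0, ⟨fun i => hrun (i + 1), ?_⟩, rfl⟩
  intro i
  have h1 := hact (i + 1)
  rw [prefixSteps_succ', ha0] at h1
  exact h1

lemma combine_safe {a : A} {fam : S → Strat S A} {s : S} {ℓ m : ℕ}
    (hm : M.levelStep s a ℓ = some m)
    (hf : ∀ t ∈ M.Succ s a, M.SafeStrat (fam t) m t) :
    M.SafeStrat (combineStrat a fam) ℓ s := by
  intro ρ hρ
  obtain ⟨ha0, hsh⟩ := combine_shift hρ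
  have h0 : (ρ 0).1 = s := hρ.2
  intro i
  cases i with
  | zero => simp [CMDP.energy, CMDP.energyFrom, prefixSteps_zero']
  | succ k =>
    have ht : (ρ 1).1 ∈ M.Succ s a := by
      have h1 := hρ.1.1 0
      rwa [h0, ha0] at h1
    have hs := hf _ ht _ hsh k
    show M.energy ℓ (runState ρ 0) (prefixSteps ρ (k + 1)) ≠ none
    rw [show runState ρ 0 = s from hρ.2, prefixSteps_succ', ha0, energy_cons', hm]
    exact hs

lemma combine_compat_cons {a : A} {fam : S → Strat S A} {s t : S} {ρ' : ℕ → S × A}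
    (ht : t ∈ M.Succ s a) (h : M.CompatFrom (fam t) t ρ') :
    M.CompatFrom (combineStrat a fam) s (consRun (s, a) ρ') := by
  obtain ⟨⟨hrun, hact⟩, h0⟩ := h
  have h0' : (ρ' 0).1 = t := h0
  refine ⟨⟨?_, ?_⟩, rfl⟩
  · intro i
    cases i with
    | zero =>
      show (ρ' 0).1 ∈ M.Succ s a
      rw [h0']; exact ht
    | succ k => exact hrun k
  · intro i
    cases i with
    | zero => rfl
    | succ k =>
      show (ρ' k).2 = combineStrat a fam
        (runState (consRun (s, a) ρ') 0, prefixSteps (consRun (s, a) ρ') (k + 1))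
      rw [prefixSteps_consRun]
      show (ρ' k).2 = fam (ρ' 0).1 ((ρ' 0).1, prefixSteps ρ' k)
      rw [h0']
      have h1 := hact k
      rw [h0] at h1
      exact h1

lemma visitsWithin_cons {T : Set S} {i : ℕ} {p : S × A} {ρ' : ℕ → S × A}
    (h : VisitsWithin T i ρ') : VisitsWithin T (i + 1) (consRun p ρ') := by
  obtain ⟨j, hj, hjT⟩ := h
  exact ⟨j + 1, Nat.succ_le_succ hj, hjT⟩

lemma iInf_nat_attained {P : ℕ → Prop} (h : (⨅ d ∈ {d | P d}, (d : ℕ∞)) ≠ ⊤) :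
    ∃ d, P d ∧ ((d : ℕ∞) = ⨅ d ∈ {d | P d}, (d : ℕ∞)) := by
  have hne : ∃ d, P d := by
    by_contra hc
    push_neg at hc
    apply h
    rw [show {d | P d} = (∅ : Set ℕ) from Set.eq_empty_iff_forall_notMem.2 hc]
    simp
  refine ⟨Nat.find hne, Nat.find_spec hne, le_antisymm ?_ (iInf₂_le _ (Nat.find_spec hne))⟩
  exact le_iInf₂ fun d hd => Nat.cast_le.2 (Nat.find_min' hne hd)

lemma safeVec_le' {s : S} {d : ℕ} (hd : d ≤ M.cap)
    (h : ∃ σ : Strat S A, M.SafeStrat σ d s) : M.safeVec s ≤ (d : ℕ∞) :=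
  iInf₂_le d ⟨hd, h⟩

lemma exists_safe_of_safeVec_le {s : S} {m : ℕ} (h : M.safeVec s ≤ (m : ℕ∞)) :
    ∃ σ : Strat S A, M.SafeStrat σ m s := by
  have hne : M.safeVec s ≠ ⊤ := ne_top_of_le_ne_top (by simp) h
  obtain ⟨d, ⟨hdc, σ, hσ⟩, heq⟩ := iInf_nat_attained hne
  have hdm : d ≤ m := Nat.cast_le.1 (heq.trans_le h)
  exact ⟨σ, SafeStrat_mono hdm hσ⟩

lemma safePRBdd_le' {T : Set S} {i : ℕ} {s : S} {ℓ : ℕ} (h : ℓ ≤ M.cap)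
    (σ : Strat S A) (hσ : M.SafeStrat σ ℓ s) (ρ : ℕ → S × A)
    (hρ : M.CompatFrom σ s ρ) (hv : VisitsWithin T i ρ) :
    M.safePRBdd T i s ≤ (ℓ : ℕ∞) :=
  iInf₂_le ℓ ⟨h, σ, hσ, ρ, hρ, hv⟩

lemma safePRBdd_attained {T : Set S} {i : ℕ} {s : S} (h : M.safePRBdd T i s ≠ ⊤) :
    ∃ ℓ, (ℓ ≤ M.cap ∧ ∃ σ : Strat S A, M.SafeStrat σ ℓ s ∧
        ∃ ρ, M.CompatFrom σ s ρ ∧ VisitsWithin T i ρ)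
      ∧ ((ℓ : ℕ∞) = M.safePRBdd T i s) :=
  iInf_nat_attained h

lemma safe_reload {σ : Strat S A} {s : S} {d d' : ℕ} (hs : s ∈ M.R)
    (h : M.SafeStrat σ d s) : M.SafeStrat σ d' s := by
  intro ρ hρ i
  have h1 := h ρ hρ i
  have h0 : runState ρ 0 = s := hρ.2
  rw [h0] at h1 ⊢
  cases hp : prefixSteps ρ i with
  | nil => simp [CMDP.energy, CMDP.energyFrom]
  | cons p rest =>
    obtain ⟨b, t⟩ := p
    rw [hp, energy_cons'] at h1
    rw [energy_cons']
    have heq : M.levelStep s b d' = M.levelStep s b d := by simp [CMDP.levelStep, hs]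
    rw [heq]
    exact h1

end AuxLemmas2

section MainDirections
set_option linter.unusedSectionVars false
variable {M : CMDP S A}

lemma safeVec_attained {s : S} (h : M.safeVec s ≠ ⊤) :
    ∃ d, (d ≤ M.cap ∧ ∃ σ : Strat S A, M.SafeStrat σ d s) ∧ ((d : ℕ∞) = M.safeVec s) :=
  iInf_nat_attained h

lemma opB_le_of_witness (T : Set S) : ∀ (i : ℕ) (s : S) (ℓ : ℕ) (σ : Strat S A) (ρ : ℕ → S × A),
    ℓ ≤ M.cap → M.SafeStrat σ ℓ s → M.CompatFrom σ s ρ → VisitsWithin T i ρ →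
    (M.opB T)^[i] (M.yTvec T) s ≤ (ℓ : ℕ∞) := by
  intro i
  induction i with
  | zero =>
    intro s ℓ σ ρ hℓ hσ hρ hvis
    obtain ⟨j, hj, hjT⟩ := hvis
    have hj0 : j = 0 := Nat.le_zero.1 hj
    subst hj0
    have hsT : s ∈ T := by rw [← hρ.2]; exact hjT
    rw [Function.iterate_zero_apply]
    simp only [CMDP.yTvec]
    rw [if_pos hsT]
    exact safeVec_le' hℓ ⟨σ, hσ⟩
  | succ i IH =>
    intro s ℓ σ ρ hℓ hσ hρ hvis
    rw [Function.iterate_succ_apply']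
    set x := (M.opB T)^[i] (M.yTvec T) with hx
    by_cases hsT : s ∈ T
    · have hsv : M.safeVec s ≤ (ℓ : ℕ∞) := safeVec_le' hℓ ⟨σ, hσ⟩
      show M.trunc2 (M.opA T x) s ≤ _
      simp only [CMDP.trunc2, CMDP.opA]
      simp only [if_pos hsT]
      rw [if_neg (not_lt.2 (hsv.trans (Nat.cast_le.2 hℓ)))]
      split_ifs with hR
      · exact zero_le
      · exact hsv
    · have h0 : (ρ 0).1 = s := hρ.2
      have haσ : (ρ 0).2 = σ (s, []) := by
        have h1 := hρ.1.2 0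
        rwa [show runState ρ 0 = s from hρ.2] at h1
      set a := (ρ 0).2 with ha
      set t₀ := (ρ 1).1 with ht0def
      have ht₀ : t₀ ∈ M.Succ s a := by
        have h1 := hρ.1.1 0
        rwa [h0] at h1
      have hE1 := hσ ρ hρ 1
      rw [show runState ρ 0 = s from hρ.2,
        show prefixSteps ρ 1 = [(a, t₀)] from by rw [prefixSteps_succ']; rfl,
        energy_cons'] at hE1
      obtain ⟨m, hm⟩ : ∃ m, M.levelStep s a ℓ = some m := by
        cases h' : M.levelStep s a ℓ with
        | none => rw [h'] at hE1; exact absurd rfl hE1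
        | some m => exact ⟨m, rfl⟩
      have hkey : M.C s a + m = (if s ∈ M.R then M.cap else ℓ) := by
        by_cases hR : s ∈ M.R
        · rw [if_pos hR]
          by_cases hcc : M.C s a ≤ M.cap
          · have : M.cap - M.C s a = m := by simpa [CMDP.levelStep, hR, hcc] using hm
            omega
          · simp [CMDP.levelStep, hR, hcc] at hm
        · rw [if_neg hR]
          by_cases hcc : M.C s a ≤ ℓ
          · have : ℓ - M.C s a = m := by simpa [CMDP.levelStep, hR, hcc] using hm
            omega
          · simp [CMDP.levelStep, hR, hcc] at hm
      have hmcap : m ≤ M.cap := by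
        by_cases hR : s ∈ M.R
        · rw [if_pos hR] at hkey; omega
        · rw [if_neg hR] at hkey; omega
      have hshift : ∀ t ∈ M.Succ s a, M.SafeStrat (shiftStrat σ s a) m t :=
        fun t ht => safe_shift hσ haσ ht hm
      have hcomp' := compatFrom_shift hρ
      obtain ⟨j, hj, hjT⟩ := hvis
      have hj0 : j ≠ 0 := by
        rintro rfl
        exact hsT (by rw [← h0]; exact hjT)
      obtain ⟨j', rfl⟩ := Nat.exists_eq_succ_of_ne_zero hj0
      have hvis' : VisitsWithin T i (fun k => ρ (k + 1)) := ⟨j', by omega, hjT⟩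
      have hVx : x t₀ ≤ (m : ℕ∞) :=
        IH t₀ m (shiftStrat σ s a) _ hmcap (hshift t₀ ht₀) hcomp' hvis'
      have hSv : ∀ t' ∈ M.Succ s a, M.safeVec t' ≤ (m : ℕ∞) :=
        fun t' ht' => safeVec_le' hmcap ⟨_, hshift t' ht'⟩
      have hinner : (⨅ t ∈ M.Succ s a,
          max (x t) (⨆ t' ∈ {t' ∈ M.Succ s a | t' ≠ t}, M.safeVec t')) ≤ (m : ℕ∞) := by
        refine le_trans (iInf₂_le t₀ ht₀) (max_le hVx ?_)
        exact iSup₂_le fun t' ht' => hSv t' ht'.1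
      have hspr : M.spr s a x ≤ (M.C s a : ℕ∞) + (m : ℕ∞) := add_le_add le_rfl hinner
      have hA : M.opA T x s ≤ (M.C s a : ℕ∞) + (m : ℕ∞) := by
        simp only [CMDP.opA]
        rw [if_neg hsT]
        exact (iInf_le _ a).trans hspr
      have hAcap : M.opA T x s ≤ (M.cap : ℕ∞) := by
        refine hA.trans ?_
        have h2 : M.C s a + m ≤ M.cap := by
          by_cases hR : s ∈ M.R
          · rw [if_pos hR] at hkey; omega
          · rw [if_neg hR] at hkey; omega
        exact_mod_cast h2
      show M.trunc2 (M.opA T x) s ≤ (ℓ : ℕ∞)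
      simp only [CMDP.trunc2]
      rw [if_neg (not_lt.2 hAcap)]
      split_ifs with hR
      · exact zero_le
      · rw [if_neg hR] at hkey
        refine hA.trans ?_
        exact_mod_cast hkey.le

end MainDirections

section DirB
set_option linter.unusedSectionVars false
variable {M : CMDP S A}

lemma safePRBdd_le_opB (T : Set S) : ∀ (i : ℕ) (s : S),
    M.safePRBdd T i s ≤ (M.opB T)^[i] (M.yTvec T) s := by
  intro i
  induction i with
  | zero =>
    intro s
    rw [Function.iterate_zero_apply]
    simp only [CMDP.yTvec]
    split_ifs with hsT
    · by_cases hv : M.safeVec s = ⊤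
      · rw [hv]; exact le_top
      · obtain ⟨d, ⟨hdc, σ, hσ⟩, heq⟩ := safeVec_attained hv
        refine le_trans (safePRBdd_le' hdc σ hσ _ (canonRun_compatFrom (M := M) σ s)
          ⟨0, le_rfl, ?_⟩) (le_of_eq heq)
        show runState (M.canonRun σ s) 0 ∈ T
        rw [(canonRun_compatFrom (M := M) σ s).2]
        exact hsT
    · exact le_top
  | succ i IH =>
    intro s
    rw [Function.iterate_succ_apply']
    set x := (M.opB T)^[i] (M.yTvec T) with hx
    by_cases htop : M.opB T x s = ⊤
    · rw [htop]; exact le_top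
    have hnlt : ¬ ((M.cap : ℕ∞) < M.opA T x s) := by
      intro hlt
      apply htop
      show M.trunc2 (M.opA T x) s = ⊤
      simp only [CMDP.trunc2]
      rw [if_pos hlt]
    have hAcap : M.opA T x s ≤ (M.cap : ℕ∞) := not_lt.1 hnlt
    have hBval : M.opB T x s = if s ∈ M.R then 0 else M.opA T x s := by
      show M.trunc2 (M.opA T x) s = _
      simp only [CMDP.trunc2]
      rw [if_neg hnlt]
    by_cases hsT : s ∈ T
    · have hAv : M.opA T x s = M.safeVec s := by
        simp only [CMDP.opA]; rw [if_pos hsT]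
      have hsv : M.safeVec s ≤ (M.cap : ℕ∞) := hAv ▸ hAcap
      obtain ⟨d, ⟨hdc, σ, hσ⟩, heq⟩ :=
        safeVec_attained (ne_top_of_le_ne_top (by simp) hsv)
      rw [hBval]
      by_cases hR : s ∈ M.R
      · rw [if_pos hR]
        have hσ0 : M.SafeStrat σ 0 s := safe_reload hR hσ
        have h1 := safePRBdd_le' (T := T) (i := i + 1) (Nat.zero_le _) σ hσ0 _
          (canonRun_compatFrom (M := M) σ s)
          ⟨0, Nat.zero_le _, by
            show runState (M.canonRun σ s) 0 ∈ T
            rw [(canonRun_compatFrom (M := M) σ s).2]; exact hsT⟩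
        simpa using h1
      · rw [if_neg hR, hAv, ← heq]
        exact safePRBdd_le' hdc σ hσ _ (canonRun_compatFrom (M := M) σ s)
          ⟨0, Nat.zero_le _, by
            show runState (M.canonRun σ s) 0 ∈ T
            rw [(canonRun_compatFrom (M := M) σ s).2]; exact hsT⟩
    · have hAv : M.opA T x s = ⨅ a : A, M.spr s a x := by
        simp only [CMDP.opA]; rw [if_neg hsT]
      obtain ⟨n, hn⟩ : ∃ n : ℕ, M.opA T x s = (n : ℕ∞) := by
        have h1 : M.opA T x s ≠ ⊤ := ne_top_of_le_ne_top (by simp) hAcap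
        lift (M.opA T x s) to ℕ using h1 with n hn
        exact ⟨n, rfl⟩
      have hncap : n ≤ M.cap := Nat.cast_le.1 (hn ▸ hAcap)
      set c : ℕ := if s ∈ M.R then M.cap else n with hc
      have hccap : c ≤ M.cap := by rw [hc]; split_ifs; exacts [le_rfl, hncap]
      have hAc : M.opA T x s ≤ (c : ℕ∞) := by
        rw [hc]; split_ifs with hR
        · exact hAcap
        · rw [hn]
      obtain ⟨a, hsprc⟩ : ∃ a : A, M.spr s a x ≤ (c : ℕ∞) := by
        have hlt : (⨅ a : A, M.spr s a x) < ((c + 1 : ℕ) : ℕ∞) := by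
          rw [← hAv]
          exact hAc.trans_lt (by exact_mod_cast Nat.lt_succ_self c)
        obtain ⟨a, ha⟩ := iInf_lt_iff.1 hlt
        exact ⟨a, Order.le_of_lt_add_one (by exact_mod_cast ha)⟩
      have hCc : M.C s a ≤ c := by
        have h1 : (M.C s a : ℕ∞) ≤ (c : ℕ∞) := le_trans le_self_add hsprc
        exact_mod_cast h1
      set m : ℕ := c - M.C s a with hmdef
      have hcm : M.C s a + m = c := by omega
      have hinner : (⨅ t ∈ M.Succ s a,
          max (x t) (⨆ t' ∈ {t' ∈ M.Succ s a | t' ≠ t}, M.safeVec t')) ≤ (m : ℕ∞) := by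
        have h1 : (M.C s a : ℕ∞) + (⨅ t ∈ M.Succ s a,
            max (x t) (⨆ t' ∈ {t' ∈ M.Succ s a | t' ≠ t}, M.safeVec t'))
            ≤ (M.C s a : ℕ∞) + (m : ℕ∞) := by
          refine le_trans (hsprc.trans (le_of_eq ?_)) le_rfl
          exact_mod_cast congrArg (fun k : ℕ => ((k : ℕ∞))) hcm.symm
        rwa [ENat.add_le_add_iff_left (by simp : (M.C s a : ℕ∞) ≠ ⊤)] at h1
      obtain ⟨t₀, ht₀, hg⟩ : ∃ t₀, t₀ ∈ M.Succ s a ∧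
          max (x t₀) (⨆ t' ∈ {t' ∈ M.Succ s a | t' ≠ t₀}, M.safeVec t') ≤ (m : ℕ∞) := by
        have hlt : (⨅ t ∈ M.Succ s a,
            max (x t) (⨆ t' ∈ {t' ∈ M.Succ s a | t' ≠ t}, M.safeVec t'))
            < ((m + 1 : ℕ) : ℕ∞) :=
          hinner.trans_lt (by exact_mod_cast Nat.lt_succ_self m)
        simp only [iInf_lt_iff] at hlt
        obtain ⟨t₀, ht₀, h2⟩ := hlt
        exact ⟨t₀, ht₀, Order.le_of_lt_add_one (by exact_mod_cast h2)⟩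
      have hxt : x t₀ ≤ (m : ℕ∞) := le_trans (le_max_left _ _) hg
      have hsvs : ∀ t' ∈ M.Succ s a, t' ≠ t₀ → M.safeVec t' ≤ (m : ℕ∞) := by
        intro t' ht' hne
        refine le_trans ?_ (le_trans (le_max_right _ _) hg)
        exact le_iSup₂ (f := fun t' _ => M.safeVec t') t' ⟨ht', hne⟩
      have hmcap : m ≤ M.cap := le_trans (by omega) hccap
      have hW : M.safePRBdd T i t₀ ≤ (m : ℕ∞) := (IH t₀).trans hxt
      obtain ⟨ℓ', ⟨hℓ'c, σ', hσ', ρ', hρ', hvis'⟩, heq'⟩ :=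
        safePRBdd_attained (ne_top_of_le_ne_top (by simp) hW)
      have hℓ'm : ℓ' ≤ m := Nat.cast_le.1 (heq'.trans_le hW)
      have hσ'm : M.SafeStrat σ' m t₀ := SafeStrat_mono hℓ'm hσ'
      have hfam0 : ∀ t : S, ∃ τ : Strat S A, (t ∈ M.Succ s a ∧ t ≠ t₀) → M.SafeStrat τ m t := by
        intro t
        by_cases hts : t ∈ M.Succ s a ∧ t ≠ t₀
        · obtain ⟨τ, hτ⟩ := exists_safe_of_safeVec_le (hsvs t hts.1 hts.2)
          exact ⟨τ, fun _ => hτ⟩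
        · exact ⟨fun _ => a, fun h => absurd h hts⟩
      choose fam0 hfam0' using hfam0
      set fam : S → Strat S A := Function.update fam0 t₀ σ' with hfamdef
      have hfam_t0 : fam t₀ = σ' := Function.update_self _ _ _
      have hfamsafe : ∀ t ∈ M.Succ s a, M.SafeStrat (fam t) m t := by
        intro t ht
        by_cases hte : t = t₀
        · subst hte; rw [hfam_t0]; exact hσ'm
        · rw [hfamdef, Function.update_of_ne hte]
          exact hfam0' t ⟨ht, hte⟩
      set ℓ : ℕ := if s ∈ M.R then 0 else n with hℓdef
      have hls : M.levelStep s a ℓ = some m := by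
        by_cases hR : s ∈ M.R
        · have hc' : c = M.cap := by rw [hc, if_pos hR]
          simp only [CMDP.levelStep]
          rw [if_pos hR, if_pos (by omega : M.C s a ≤ M.cap)]
          congr 1; omega
        · have hc' : c = n := by rw [hc, if_neg hR]
          have hl' : ℓ = n := by rw [hℓdef, if_neg hR]
          simp only [CMDP.levelStep]
          rw [if_neg hR, if_pos (by omega : M.C s a ≤ ℓ)]
          congr 1; omega
      have hsafe : M.SafeStrat (combineStrat a fam) ℓ s := combine_safe hls hfamsafe
      have hrun : M.CompatFrom (combineStrat a fam) s (consRun (s, a) ρ') :=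
        combine_compat_cons ht₀ (by rw [hfam_t0]; exact hρ')
      have hvis2 : VisitsWithin T (i + 1) (consRun (s, a) ρ') := visitsWithin_cons hvis'
      have hfin : M.safePRBdd T (i + 1) s ≤ (ℓ : ℕ∞) :=
        safePRBdd_le' (by rw [hℓdef]; split_ifs; exacts [Nat.zero_le _, hncap])
          _ hsafe _ hrun hvis2
      refine hfin.trans ?_
      rw [hBval, hℓdef]
      split_ifs with hR
      · simp
      · rw [hn]

end DirB
end CMDP
open CMDP in
/-- The `i`-th iterate of the operator `B` on `y_T` equals the vector of minimal
levels for safe positive reachability of `T` within `i` steps. -/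
theorem opB_iterate_eq_safePRBdd {S A : Type} [Fintype S] (M : CMDP S A)
    (T : Set S) :
    ∀ (i : ℕ) (s : S), (M.opB T)^[i] (M.yTvec T) s = M.safePRBdd T i s := by
  intro i s
  refine le_antisymm ?_ (safePRBdd_le_opB T i s)
  refine le_iInf₂ fun ℓ hℓ => ?_
  obtain ⟨hℓc, σ, hσ, ρ, hρ, hvis⟩ := hℓ
  exact opB_le_of_witness T i s ℓ σ ρ hℓc hσ hρ hvis
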